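/- For any finite job set 𝒥 and any feasible schedule S of 𝒥, Σ_{t∈ℤ} avg(t)^α ≤ ((2α)^α / 2) · cost(S). (This is the statement that the speed profile of the AVR algorithm on the corresponding DVS instance has cost at most (2α)^α/2 times the optimal Grid cost.) -/

import Mathlib

open scoped BigOperators NNReal

structure Job where
  r : ℤ
  d : ℤ
  w : ℤ
  h : ℝ

def Job.Valid (J : Job) : Prop := 1 ≤ J.w ∧ 0 < J.h ∧ J.r + J.w ≤ J.d

def Feasible {ι : Type*} (job : ι → Job) (st : ι → ℤ) : Prop :=
  ∀ i, (job i).r ≤ st i ∧ st i + (job i).w ≤ (job i).d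

noncomputable def load {ι : Type*} [Fintype ι] (job : ι → Job) (st : ι → ℤ) (t : ℤ) : ℝ :=
  ∑ i, if st i ≤ t ∧ t < st i + (job i).w then (job i).h else 0

noncomputable def cost {ι : Type*} [Fintype ι] (α : ℝ) (job : ι → Job) (st : ι → ℤ) : ℝ :=
  ∑' t : ℤ, load job st t ^ α

noncomputable def OPT {ι : Type*} [Fintype ι] (α : ℝ) (job : ι → Job) : ℝ :=
  sInf {c : ℝ | ∃ st, Feasible job st ∧ cost α job st = c}

noncomputable def den (J : Job) : ℝ := (J.w * J.h) / (J.d - J.r)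

noncomputable def avg {ι : Type*} [Fintype ι] (job : ι → Job) (t : ℤ) : ℝ :=
  ∑ i, if (job i).r ≤ t ∧ t < (job i).d then den (job i) else 0



section AuxAVR
open Finset

lemma abel_scalar {q a b : ℝ} (hq : 1 < q) (hb : 0 ≤ b) (hba : b ≤ a) :
    a ^ q - b ^ q ≤ (q / (q - 1)) * a * (a ^ (q - 1) - b ^ (q - 1)) := by
  have ha : 0 ≤ a := hb.trans hba
  have hq0 : (0:ℝ) < q := lt_trans one_pos hq
  have hq1 : (0:ℝ) < q - 1 := by linarith
  rcases eq_or_lt_of_le ha with h0 | hapos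
  · have hb0 : b = 0 := le_antisymm (h0 ▸ hba) hb
    rw [← h0, hb0]
    rw [Real.zero_rpow hq0.ne', Real.zero_rpow hq1.ne']
    simp
  have key : q * (a * b ^ (q - 1)) ≤ a ^ q + (q - 1) * b ^ q := by
    have hgm := Real.geom_mean_le_arith_mean2_weighted
      (by positivity : (0:ℝ) ≤ 1/q) (by positivity : (0:ℝ) ≤ (q-1)/q)
      (by positivity : (0:ℝ) ≤ a ^ q) (by positivity : (0:ℝ) ≤ b ^ q)
      (by field_simp; ring)
    have e1 : (a ^ q) ^ (1/q : ℝ) = a := by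
      rw [← Real.rpow_mul ha]
      rw [mul_one_div_cancel hq0.ne', Real.rpow_one]
    have e2 : (b ^ q) ^ ((q-1)/q : ℝ) = b ^ (q - 1) := by
      rw [← Real.rpow_mul hb]
      congr 1
      field_simp
    rw [e1, e2] at hgm
    have : a * b ^ (q-1) ≤ 1/q * a^q + (q-1)/q * b^q := hgm
    calc q * (a * b ^ (q-1)) ≤ q * (1/q * a^q + (q-1)/q * b^q) := by
          exact mul_le_mul_of_nonneg_left this hq0.le
      _ = a ^ q + (q-1) * b ^ q := by field_simp
  have haa : a * a ^ (q - 1) = a ^ q := by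
    nth_rewrite 1 [← Real.rpow_one a]
    rw [← Real.rpow_add hapos]; ring_nf
  rw [div_mul_eq_mul_div, div_mul_eq_mul_div, le_div_iff₀ hq1]
  nlinarith [key]

-- kickback


lemma kickback {X K q : ℝ} (hq : 1 < q) (hX : 0 ≤ X) (hK : 0 ≤ K)
    (h : X ≤ K * X ^ (1 - 1/q)) : X ≤ K ^ q := by
  have hq0 : (0:ℝ) < q := lt_trans one_pos hq
  rcases eq_or_lt_of_le hX with h0 | hXpos
  · rw [← h0]; positivity
  have hsplit : X = X ^ (1/q : ℝ) * X ^ (1 - 1/q : ℝ) := by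
    rw [← Real.rpow_add hXpos]; ring_nf; rw [Real.rpow_one]
  have hpow : (0:ℝ) < X ^ (1 - 1/q : ℝ) := Real.rpow_pos_of_pos hXpos _
  have h2 : X ^ (1/q : ℝ) ≤ K := by
    have h' : X ^ (1/q : ℝ) * X ^ (1 - 1/q : ℝ) ≤ K * X ^ (1 - 1/q) := le_trans (le_of_eq hsplit.symm) h
    exact le_of_mul_le_mul_right h' hpow
  calc X = (X ^ (1/q : ℝ)) ^ q := by
        rw [← Real.rpow_mul hX]; rw [one_div_mul_cancel hq0.ne', Real.rpow_one]
    _ ≤ K ^ q := Real.rpow_le_rpow (Real.rpow_nonneg hX _) h2 hq0.le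


lemma dist_ineq {τ : Type*} (W : Finset τ) (q : ℝ) (hq : 1 < q) :
    ∀ n : ℕ, ∀ M g : τ → ℝ, (∀ t ∈ W, 0 ≤ M t) → (∀ t ∈ W, 0 ≤ g t) →
    (∀ lam : ℝ, 0 < lam →
      lam * ((W.filter (fun t => lam ≤ M t)).card : ℝ)
        ≤ ∑ t ∈ W.filter (fun t => lam ≤ M t), g t) →
    ((W.filter (fun t => 0 < M t)).image M).card ≤ n →
    ∑ t ∈ W, M t ^ q ≤ (q / (q - 1)) * ∑ t ∈ W, g t * M t ^ (q - 1) := by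
  have hq0 : (0:ℝ) < q := lt_trans one_pos hq
  have hq1 : (0:ℝ) < q - 1 := by linarith
  have hq' : (0:ℝ) < q / (q-1) := by positivity
  intro n
  induction n with
  | zero =>
    intro M g hM hg _ hcard
    have hV : (W.filter (fun t => 0 < M t)).image M = ∅ := card_eq_zero.mp (le_antisymm hcard (Nat.zero_le _))
    have hM0 : ∀ t ∈ W, M t = 0 := by
      intro t ht
      by_contra h
      have hpos : 0 < M t := lt_of_le_of_ne (hM t ht) (Ne.symm h)
      have : M t ∈ (W.filter (fun t => 0 < M t)).image M :=
        mem_image_of_mem M (mem_filter.mpr ⟨ht, hpos⟩)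
      simp [hV] at this
    have h1 : ∑ t ∈ W, M t ^ q = 0 := by
      apply Finset.sum_eq_zero; intro t ht
      rw [hM0 t ht, Real.zero_rpow hq0.ne']
    have h2 : ∑ t ∈ W, g t * M t ^ (q-1) = 0 := by
      apply Finset.sum_eq_zero; intro t ht
      rw [hM0 t ht, Real.zero_rpow hq1.ne', mul_zero]
    rw [h1, h2, mul_zero]
  | succ n ih =>
    intro M g hM hg hweak hcard
    set V := (W.filter (fun t => 0 < M t)).image M with hVdef
    rcases V.eq_empty_or_nonempty with hV | hV
    · exact ih M g hM hg hweak (by rw [show (W.filter (fun t => 0 < M t)).image M = V from rfl, hV]; simp)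
    set lam1 := V.max' hV with hl1def
    have hl1V : lam1 ∈ V := V.max'_mem hV
    have hl1pos : 0 < lam1 := by
      obtain ⟨t, ht, hMt⟩ := mem_image.mp hl1V
      have := (mem_filter.mp ht).2
      rw [hMt] at this; exact this
    have hle1 : ∀ t ∈ W, M t ≤ lam1 := by
      intro t ht
      rcases le_or_gt (M t) 0 with h | h
      · exact h.trans hl1pos.le
      · exact V.le_max' _ (mem_image_of_mem M (mem_filter.mpr ⟨ht, h⟩))
    set lam2 : ℝ := if h : (V.erase lam1).Nonempty then (V.erase lam1).max' h else 0 with hl2def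
    have hl2nonneg : 0 ≤ lam2 := by
      rw [hl2def]
      split_ifs with h
      · obtain ⟨t, ht, hMt⟩ := mem_image.mp (mem_of_mem_erase ((V.erase lam1).max'_mem h))
        rw [← hMt]; exact le_of_lt (mem_filter.mp ht).2
      · exact le_refl 0
    have hl2lt : lam2 < lam1 := by
      rw [hl2def]
      split_ifs with h
      · have hmem := (V.erase lam1).max'_mem h
        exact lt_of_le_of_ne (V.le_max' _ (mem_of_mem_erase hmem)) (ne_of_mem_erase hmem)
      · exact hl1pos
    have hle2 : ∀ t ∈ W, M t < lam1 → M t ≤ lam2 := by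
      intro t ht hlt
      rcases le_or_gt (M t) 0 with h | h
      · exact h.trans hl2nonneg
      · have hmem : M t ∈ V.erase lam1 :=
          mem_erase.mpr ⟨ne_of_lt hlt, mem_image_of_mem M (mem_filter.mpr ⟨ht, h⟩)⟩
        have hne : (V.erase lam1).Nonempty := ⟨_, hmem⟩
        rw [hl2def, dif_pos hne]
        exact (V.erase lam1).le_max' _ hmem
    set M' : τ → ℝ := fun t => if lam1 ≤ M t then lam2 else M t with hM'def
    have hM'nonneg : ∀ t ∈ W, 0 ≤ M' t := by
      intro t ht
      rw [hM'def]; dsimp only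
      split_ifs
      · exact hl2nonneg
      · exact hM t ht
    -- weak type for M'
    have hweak' : ∀ lam : ℝ, 0 < lam →
        lam * ((W.filter (fun t => lam ≤ M' t)).card : ℝ)
          ≤ ∑ t ∈ W.filter (fun t => lam ≤ M' t), g t := by
      intro lam hlam
      rcases le_or_gt lam lam2 with hc | hc
      · have heq : W.filter (fun t => lam ≤ M' t) = W.filter (fun t => lam ≤ M t) := by
          apply filter_congr
          intro t ht
          rw [hM'def]; dsimp only
          split_ifs with h
          · constructor
            · intro _; exact le_trans (hc.trans hl2lt.le) h
            · intro _; exact hc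
          · rfl
        rw [heq]; exact hweak lam hlam
      · have heq : W.filter (fun t => lam ≤ M' t) = ∅ := by
          apply filter_eq_empty_iff.mpr
          intro t ht
          rw [hM'def]; dsimp only
          split_ifs with h
          · exact not_le.mpr hc
          · push_neg at h
            exact not_le.mpr (lt_of_le_of_lt (hle2 t ht h) hc)
        rw [heq]; simp
    -- image card decreases
    have himage' : (W.filter (fun t => 0 < M' t)).image M' ⊆ V.erase lam1 := by
      intro v hv
      obtain ⟨t, ht, hMt⟩ := mem_image.mp hv
      obtain ⟨htW, htpos⟩ := mem_filter.mp ht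
      rw [hM'def] at hMt htpos; dsimp only at hMt htpos
      by_cases h : lam1 ≤ M t
      · rw [if_pos h] at hMt htpos
        have hne : (V.erase lam1).Nonempty := by
          by_contra hne
          rw [hl2def, dif_neg hne] at htpos
          exact lt_irrefl 0 htpos
        rw [← hMt, hl2def, dif_pos hne]
        exact (V.erase lam1).max'_mem hne
      · rw [if_neg h] at hMt htpos
        push_neg at h
        exact mem_erase.mpr ⟨hMt ▸ ne_of_lt h,
          hMt ▸ mem_image_of_mem M (mem_filter.mpr ⟨htW, htpos⟩)⟩
    have hcard' : ((W.filter (fun t => 0 < M' t)).image M').card ≤ n := by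
      have h1 := card_le_card himage'
      rw [card_erase_of_mem hl1V] at h1
      omega
    have IH := ih M' g hM'nonneg hg hweak' hcard'
    -- difference computation
    set F := W.filter (fun t => lam1 ≤ M t) with hFdef
    have hMF : ∀ t ∈ F, M t = lam1 := fun t ht =>
      le_antisymm (hle1 t (mem_filter.mp ht).1) (mem_filter.mp ht).2
    have hM'F : ∀ t ∈ F, M' t = lam2 := by
      intro t ht
      rw [hM'def]; exact if_pos (mem_filter.mp ht).2
    have hM'nF : ∀ t ∈ W.filter (fun t => ¬ lam1 ≤ M t), M' t = M t := by
      intro t ht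
      rw [hM'def]; exact if_neg (mem_filter.mp ht).2
    have e1 : ∑ t ∈ W, M t ^ q = ∑ t ∈ W, M' t ^ q + (F.card : ℝ) * (lam1 ^ q - lam2 ^ q) := by
      rw [← Finset.sum_filter_add_sum_filter_not W (fun t => lam1 ≤ M t) (fun t => M t ^ q),
          ← Finset.sum_filter_add_sum_filter_not W (fun t => lam1 ≤ M t) (fun t => M' t ^ q)]
      have c1 : ∑ t ∈ F, M t ^ q = (F.card : ℝ) * lam1 ^ q := by
        rw [Finset.sum_congr rfl (fun t ht => by rw [hMF t ht])]
        rw [Finset.sum_const, nsmul_eq_mul]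
      have c2 : ∑ t ∈ F, M' t ^ q = (F.card : ℝ) * lam2 ^ q := by
        rw [Finset.sum_congr rfl (fun t ht => by rw [hM'F t ht])]
        rw [Finset.sum_const, nsmul_eq_mul]
      have c3 : ∑ t ∈ W.filter (fun t => ¬ lam1 ≤ M t), M' t ^ q
          = ∑ t ∈ W.filter (fun t => ¬ lam1 ≤ M t), M t ^ q :=
        Finset.sum_congr rfl (fun t ht => by rw [hM'nF t ht])
      rw [c1, c2, c3]; ring
    have e2 : ∑ t ∈ W, g t * M t ^ (q-1)
        = ∑ t ∈ W, g t * M' t ^ (q-1) + (∑ t ∈ F, g t) * (lam1 ^ (q-1) - lam2 ^ (q-1)) := by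
      rw [← Finset.sum_filter_add_sum_filter_not W (fun t => lam1 ≤ M t)
            (fun t => g t * M t ^ (q-1)),
          ← Finset.sum_filter_add_sum_filter_not W (fun t => lam1 ≤ M t)
            (fun t => g t * M' t ^ (q-1))]
      have c1 : ∑ t ∈ F, g t * M t ^ (q-1) = (∑ t ∈ F, g t) * lam1 ^ (q-1) := by
        rw [Finset.sum_mul]
        exact Finset.sum_congr rfl (fun t ht => by rw [hMF t ht])
      have c2 : ∑ t ∈ F, g t * M' t ^ (q-1) = (∑ t ∈ F, g t) * lam2 ^ (q-1) := by
        rw [Finset.sum_mul]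
        exact Finset.sum_congr rfl (fun t ht => by rw [hM'F t ht])
      have c3 : ∑ t ∈ W.filter (fun t => ¬ lam1 ≤ M t), g t * M' t ^ (q-1)
          = ∑ t ∈ W.filter (fun t => ¬ lam1 ≤ M t), g t * M t ^ (q-1) :=
        Finset.sum_congr rfl (fun t ht => by rw [hM'nF t ht])
      rw [c1, c2, c3]; ring
    -- key step
    have hwk := hweak lam1 hl1pos
    rw [← hFdef] at hwk
    have habel := abel_scalar hq hl2nonneg hl2lt.le
    have hdiffnn : 0 ≤ lam1 ^ (q-1) - lam2 ^ (q-1) :=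
      sub_nonneg.mpr (Real.rpow_le_rpow hl2nonneg hl2lt.le hq1.le)
    have key : (F.card : ℝ) * (lam1 ^ q - lam2 ^ q)
        ≤ (q/(q-1)) * ((∑ t ∈ F, g t) * (lam1 ^ (q-1) - lam2 ^ (q-1))) := by
      calc (F.card : ℝ) * (lam1 ^ q - lam2 ^ q)
          ≤ (F.card : ℝ) * ((q/(q-1)) * lam1 * (lam1 ^ (q-1) - lam2 ^ (q-1))) := by
            apply mul_le_mul_of_nonneg_left habel (Nat.cast_nonneg _)
        _ = (q/(q-1)) * ((lam1 * F.card) * (lam1 ^ (q-1) - lam2 ^ (q-1))) := by ring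
        _ ≤ (q/(q-1)) * ((∑ t ∈ F, g t) * (lam1 ^ (q-1) - lam2 ^ (q-1))) := by
            apply mul_le_mul_of_nonneg_left _ hq'.le
            exact mul_le_mul_of_nonneg_right hwk hdiffnn
    rw [e1, e2, mul_add]
    linarith [IH]


noncomputable def Mp (B : ℤ) (g : ℤ → ℝ) (s : ℤ) : ℝ :=
  (Finset.Icc (1:ℤ) (max 1 (B+1-s))).sup'
    ⟨1, Finset.mem_Icc.mpr ⟨le_refl _, le_max_left _ _⟩⟩
    (fun n => (∑ u ∈ Finset.Ico s (s+n), g u) / (n:ℝ))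


lemma Mp_ge (B : ℤ) (g : ℤ → ℝ) (s n : ℤ) (hn : 1 ≤ n) (hnB : n ≤ B+1-s) :
    (∑ u ∈ Finset.Ico s (s+n), g u) / (n:ℝ) ≤ Mp B g s := by
  unfold Mp
  exact Finset.le_sup' (fun n : ℤ => (∑ u ∈ Finset.Ico s (s+n), g u) / (n:ℝ))
    (Finset.mem_Icc.mpr ⟨hn, hnB.trans (le_max_right _ _)⟩)


lemma Mp_nonneg (B : ℤ) (g : ℤ → ℝ) (hg : ∀ u, 0 ≤ g u) (s : ℤ) : 0 ≤ Mp B g s := by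
  have h1 : (∑ u ∈ Finset.Ico s (s+1), g u) / ((1:ℤ):ℝ) ≤ Mp B g s := by
    unfold Mp
    exact Finset.le_sup' (fun n : ℤ => (∑ u ∈ Finset.Ico s (s+n), g u) / (n:ℝ))
      (Finset.mem_Icc.mpr ⟨le_refl _, le_max_left _ _⟩)
  refine le_trans ?_ h1
  apply div_nonneg (Finset.sum_nonneg fun u _ => hg u) (by norm_num)


lemma Mp_attained (B : ℤ) (g : ℤ → ℝ) (s : ℤ) :
    ∃ n : ℤ, 1 ≤ n ∧ n ≤ max 1 (B+1-s) ∧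
      Mp B g s = (∑ u ∈ Finset.Ico s (s+n), g u) / (n:ℝ) := by
  obtain ⟨n, hn, he⟩ := Finset.exists_mem_eq_sup'
    (⟨1, Finset.mem_Icc.mpr ⟨le_refl _, le_max_left _ _⟩⟩ :
      (Finset.Icc (1:ℤ) (max 1 (B+1-s))).Nonempty)
    (fun n => (∑ u ∈ Finset.Ico s (s+n), g u) / (n:ℝ))
  exact ⟨n, (Finset.mem_Icc.mp hn).1, (Finset.mem_Icc.mp hn).2, he⟩


lemma weak_type (A B : ℤ) (g : ℤ → ℝ) (hg : ∀ u, 0 ≤ g u)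
    (lam : ℝ) (hlam : 0 < lam) :
    lam * (((Finset.Icc A B).filter (fun t => lam ≤ Mp B g t)).card : ℝ)
      ≤ ∑ t ∈ (Finset.Icc A B).filter (fun t => lam ≤ Mp B g t), g t := by
  set G : ℤ → ℝ := fun t => (∑ u ∈ Finset.Ico A t, g u) - lam * ((t : ℝ) - (A : ℝ)) with hGdef
  set E := (Finset.Icc A B).filter (fun t => lam ≤ Mp B g t) with hEdef
  have hGdiff : ∀ v w : ℤ, A ≤ v → v ≤ w →
      G w - G v = (∑ u ∈ Finset.Ico v w, g u) - lam * ((w : ℝ) - (v : ℝ)) := by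
    intro v w hAv hvw
    have hsum : ∑ u ∈ Finset.Ico A v, g u + ∑ u ∈ Finset.Ico v w, g u
        = ∑ u ∈ Finset.Ico A w, g u := by
      rw [← Finset.Ico_union_Ico_eq_Ico hAv hvw,
        Finset.sum_union (Finset.Ico_disjoint_Ico_consecutive A v w)]
    rw [hGdef]; dsimp only
    rw [← hsum]; ring
  -- W1: escape point
  have W1 : ∀ t ∈ E, ∃ u : ℤ, t < u ∧ u ≤ B + 1 ∧ G t ≤ G u := by
    intro t ht
    obtain ⟨htAB, htM⟩ := Finset.mem_filter.mp ht
    obtain ⟨htA, htB⟩ := Finset.mem_Icc.mp htAB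
    obtain ⟨n, hn1, hnmax, hMeq⟩ := Mp_attained B g t
    have hmax : max 1 (B+1-t) = B+1-t := max_eq_right (by omega)
    rw [hmax] at hnmax
    have hnpos : (0:ℝ) < (n:ℝ) := by exact_mod_cast hn1.trans_lt' zero_lt_one
    have hsum : lam * (n:ℝ) ≤ ∑ u ∈ Finset.Ico t (t+n), g u := by
      have := htM
      rw [hMeq, le_div_iff₀ hnpos] at this
      linarith
    refine ⟨t + n, by omega, by omega, ?_⟩
    have := hGdiff t (t+n) htA (by omega)
    have hcast : ((t+n : ℤ) : ℝ) - (t:ℝ) = (n:ℝ) := by push_cast; ring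
    rw [hcast] at this
    linarith
  -- main induction
  have main : ∀ m : ℕ, ∀ C : ℤ, A ≤ C → (B + 1 - C).toNat ≤ m →
      lam * ((E.filter (fun t => C ≤ t)).card : ℝ)
        ≤ ∑ t ∈ E.filter (fun t => C ≤ t), g t := by
    intro m
    induction m with
    | zero =>
      intro C hAC hm
      have hempty : E.filter (fun t => C ≤ t) = ∅ := by
        apply Finset.filter_eq_empty_iff.mpr
        intro t ht
        have := (Finset.mem_Icc.mp (Finset.mem_filter.mp ht).1).2
        omega
      rw [hempty]; simp
    | succ m ih =>
      intro C hAC hm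
      set EC := E.filter (fun t => C ≤ t) with hECdef
      rcases EC.eq_empty_or_nonempty with hemp | hne
      · rw [hemp]; simp
      set t0 := EC.min' hne with ht0def
      have ht0EC : t0 ∈ EC := EC.min'_mem hne
      obtain ⟨ht0E, ht0C⟩ := Finset.mem_filter.mp ht0EC
      obtain ⟨ht0A, ht0B⟩ := Finset.mem_Icc.mp (Finset.mem_filter.mp ht0E).1
      -- sigma
      obtain ⟨u1, hu1t, hu1B, hu1G⟩ := W1 t0 ht0E
      set U := (Finset.Icc (t0+1) (B+1)).filter (fun u => G t0 ≤ G u) with hUdef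
      have hUne : U.Nonempty := ⟨u1, Finset.mem_filter.mpr ⟨Finset.mem_Icc.mpr ⟨by omega, hu1B⟩, hu1G⟩⟩
      set σ := U.min' hUne with hσdef
      have hσU : σ ∈ U := U.min'_mem hUne
      obtain ⟨hσIcc, hσG⟩ := Finset.mem_filter.mp hσU
      obtain ⟨hσ1, hσ2⟩ := Finset.mem_Icc.mp hσIcc
      have hmin : ∀ v : ℤ, t0 < v → v < σ → G v < G t0 := by
        intro v hv1 hv2
        by_contra h
        push_neg at h
        have : v ∈ U := Finset.mem_filter.mpr ⟨Finset.mem_Icc.mpr ⟨by omega, by omega⟩, h⟩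
        have := U.min'_le v this
        omega
      -- interval inside EC
      have hIco : ∀ v : ℤ, t0 ≤ v → v < σ → v ∈ EC := by
        intro v hv1 hv2
        rcases eq_or_lt_of_le hv1 with rfl | hv1'
        · exact ht0EC
        have hvE : v ∈ E := by
          rw [hEdef]
          apply Finset.mem_filter.mpr
          refine ⟨Finset.mem_Icc.mpr ⟨by omega, by omega⟩, ?_⟩
          have hGv : G v < G t0 := hmin v hv1' hv2
          have hdiff := hGdiff v σ (by omega) (by omega)
          have hsum : lam * ((σ:ℝ) - (v:ℝ)) ≤ ∑ u ∈ Finset.Ico v σ, g u := by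
            have : (0:ℝ) ≤ G σ - G v := by linarith
            linarith [hdiff]
          have hge := Mp_ge B g v (σ - v) (by omega) (by omega)
          have hcast : v + (σ - v) = σ := by ring
          rw [hcast] at hge
          have hnpos : (0:ℝ) < ((σ - v : ℤ):ℝ) := by exact_mod_cast (by omega : (0:ℤ) < σ - v)
          refine le_trans ?_ hge
          rw [le_div_iff₀ hnpos]
          have : ((σ - v : ℤ):ℝ) = (σ:ℝ) - (v:ℝ) := by push_cast; ring
          rw [this]
          linarith
        exact Finset.mem_filter.mpr ⟨hvE, by omega⟩
      have hIcoSub : Finset.Ico t0 σ ⊆ EC := by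
        intro v hv
        obtain ⟨h1, h2⟩ := Finset.mem_Ico.mp hv
        exact hIco v h1 h2
      have hfilt : EC.filter (fun t => t < σ) = Finset.Ico t0 σ := by
        apply Finset.ext
        intro v
        constructor
        · intro hv
          obtain ⟨hvEC, hvσ⟩ := Finset.mem_filter.mp hv
          exact Finset.mem_Ico.mpr ⟨EC.min'_le v hvEC, hvσ⟩
        · intro hv
          obtain ⟨h1, h2⟩ := Finset.mem_Ico.mp hv
          exact Finset.mem_filter.mpr ⟨hIco v h1 h2, h2⟩
      -- split
      have hsplitsum : ∑ t ∈ EC, g t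
          = ∑ t ∈ Finset.Ico t0 σ, g t + ∑ t ∈ EC.filter (fun t => ¬ t < σ), g t := by
        rw [← hfilt]
        exact (Finset.sum_filter_add_sum_filter_not EC _ _).symm
      have hsplitcard : (EC.card : ℝ)
          = ((Finset.Ico t0 σ).card : ℝ) + ((EC.filter (fun t => ¬ t < σ)).card : ℝ) := by
        rw [← hfilt]
        rw [← Nat.cast_add]
        congr 1
        exact (Finset.card_filter_add_card_filter_not (fun t => t < σ)).symm
      -- bound on the interval
      have hbound1 : lam * ((Finset.Ico t0 σ).card : ℝ) ≤ ∑ t ∈ Finset.Ico t0 σ, g t := by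
        have hdiff := hGdiff t0 σ ht0A (by omega)
        have h0 : ((σ - t0).toNat : ℤ) = σ - t0 := Int.toNat_of_nonneg (by omega)
        have hcard : ((Finset.Ico t0 σ).card : ℝ) = (σ:ℝ) - (t0:ℝ) := by
          rw [Int.card_Ico]
          exact_mod_cast congrArg (Int.cast : ℤ → ℝ) h0
        rw [hcard]
        have : (0:ℝ) ≤ G σ - G t0 := by linarith
        linarith
      -- rest
      have hrest : EC.filter (fun t => ¬ t < σ) = E.filter (fun t => σ ≤ t) := by
        rw [hECdef, Finset.filter_filter]
        apply Finset.filter_congr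
        intro t ht
        constructor
        · intro ⟨h1, h2⟩; omega
        · intro h; constructor <;> omega
      have hih := ih σ (by omega) (by omega)
      rw [← hrest] at hih
      rw [hsplitsum, hsplitcard]
      linarith
  have := main (B + 1 - A).toNat A (le_refl A) (le_refl _)
  have hEA : E.filter (fun t => A ≤ t) = E := by
    apply Finset.filter_true_of_mem
    intro t ht
    exact (Finset.mem_Icc.mp (Finset.mem_filter.mp ht).1).1
  rw [hEA] at this
  exact this


lemma maximal_ineq (A B : ℤ) (g : ℤ → ℝ) (hg : ∀ u, 0 ≤ g u) (q : ℝ) (hq : 1 < q) :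
    ∑ t ∈ Finset.Icc A B, Mp B g t ^ q ≤ (q/(q-1))^q * ∑ t ∈ Finset.Icc A B, g t ^ q := by
  have hq0 : (0:ℝ) < q := lt_trans one_pos hq
  have hq1 : (0:ℝ) < q - 1 := by linarith
  have hq' : (0:ℝ) < q / (q-1) := by positivity
  set W := Finset.Icc A B with hWdef
  set M : ℤ → ℝ := Mp B g with hMdef
  have hMnn : ∀ t ∈ W, 0 ≤ M t := fun t _ => Mp_nonneg B g hg t
  have hgnn : ∀ t ∈ W, 0 ≤ g t := fun t _ => hg t
  have hd := dist_ineq W q hq ((W.filter (fun t => 0 < M t)).image M).card M g hMnn hgnn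
    (fun lam hlam => weak_type A B g hg lam hlam) (le_refl _)
  -- Hölder
  have hpq : q.HolderConjugate (q/(q-1)) := (Real.holderConjugate_iff_eq_conjExponent hq).mpr rfl
  have holder := Real.inner_le_Lp_mul_Lq W g (fun t => M t ^ (q-1)) hpq
  have e1 : ∑ t ∈ W, |g t| ^ q = ∑ t ∈ W, g t ^ q :=
    Finset.sum_congr rfl (fun t ht => by rw [abs_of_nonneg (hg t)])
  have e2 : ∑ t ∈ W, |M t ^ (q-1)| ^ (q/(q-1)) = ∑ t ∈ W, M t ^ q := by
    apply Finset.sum_congr rfl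
    intro t ht
    rw [abs_of_nonneg (Real.rpow_nonneg (hMnn t ht) _)]
    rw [← Real.rpow_mul (hMnn t ht)]
    congr 1
    field_simp
  rw [e1, e2] at holder
  have hXnn : 0 ≤ ∑ t ∈ W, M t ^ q :=
    Finset.sum_nonneg (fun t ht => Real.rpow_nonneg (hMnn t ht) _)
  have hGnn : 0 ≤ ∑ t ∈ W, g t ^ q :=
    Finset.sum_nonneg (fun t ht => Real.rpow_nonneg (hg t) _)
  have hexp : 1/(q/(q-1)) = 1 - 1/q := by field_simp
  rw [hexp] at holder
  have hkey : ∑ t ∈ W, M t ^ q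
      ≤ ((q/(q-1)) * (∑ t ∈ W, g t ^ q) ^ (1/q)) * (∑ t ∈ W, M t ^ q) ^ (1 - 1/q) := by
    calc ∑ t ∈ W, M t ^ q ≤ (q/(q-1)) * ∑ t ∈ W, g t * M t ^ (q-1) := hd
      _ ≤ (q/(q-1)) * ((∑ t ∈ W, g t ^ q) ^ (1/q) * (∑ t ∈ W, M t ^ q) ^ (1 - 1/q)) :=
          mul_le_mul_of_nonneg_left holder hq'.le
      _ = ((q/(q-1)) * (∑ t ∈ W, g t ^ q) ^ (1/q)) * (∑ t ∈ W, M t ^ q) ^ (1 - 1/q) := by ring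
  have hKnn : 0 ≤ (q/(q-1)) * (∑ t ∈ W, g t ^ q) ^ (1/q) := by positivity
  have := kickback hq hXnn hKnn hkey
  calc ∑ t ∈ W, M t ^ q ≤ ((q/(q-1)) * (∑ t ∈ W, g t ^ q) ^ (1/q)) ^ q := this
    _ = (q/(q-1))^q * ∑ t ∈ W, g t ^ q := by
        rw [Real.mul_rpow hq'.le (Real.rpow_nonneg hGnn _)]
        rw [← Real.rpow_mul hGnn]
        rw [one_div_mul_cancel hq0.ne', Real.rpow_one]


noncomputable def Mm (A B : ℤ) (g : ℤ → ℝ) (s : ℤ) : ℝ :=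
  Mp B (fun v => g (A+B-1-v)) (A+B-s)


lemma sum_reflect (A B : ℤ) (g : ℤ → ℝ) (a b : ℤ) :
    ∑ u ∈ Finset.Ico a b, (fun v => g (A+B-1-v)) u = ∑ w ∈ Finset.Ico (A+B-b) (A+B-a), g w := by
  apply Finset.sum_nbij' (i := fun u => A+B-1-u) (j := fun w => A+B-1-w)
  · intro u hu
    simp only [Finset.mem_Ico] at hu ⊢
    omega
  · intro w hw
    simp only [Finset.mem_Ico] at hw ⊢
    omega
  · intro u _; omega
  · intro w _; omega
  · intro u _; rfl


lemma Mm_ge (A B : ℤ) (g : ℤ → ℝ) (s n : ℤ) (hn : 1 ≤ n) (hnA : n ≤ s - A + 1) :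
    (∑ u ∈ Finset.Ico (s-n) s, g u) / (n:ℝ) ≤ Mm A B g s := by
  have h := Mp_ge B (fun v => g (A+B-1-v)) (A+B-s) n hn (by omega)
  rw [sum_reflect A B g (A+B-s) (A+B-s+n)] at h
  have e1 : A+B-(A+B-s+n) = s - n := by ring
  have e2 : A+B-(A+B-s) = s := by ring
  rw [e1, e2] at h
  exact h


lemma Mm_nonneg (A B : ℤ) (g : ℤ → ℝ) (hg : ∀ u, 0 ≤ g u) (s : ℤ) : 0 ≤ Mm A B g s :=
  Mp_nonneg B _ (fun u => hg _) _


lemma Mm_maximal (A B : ℤ) (hAB : A ≤ B) (g : ℤ → ℝ) (hg : ∀ u, 0 ≤ g u)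
    (hgA : g (A-1) = 0) (q : ℝ) (hq : 1 < q) :
    ∑ t ∈ Finset.Icc A B, Mm A B g t ^ q ≤ (q/(q-1))^q * ∑ t ∈ Finset.Icc A B, g t ^ q := by
  have hq0 : (0:ℝ) < q := lt_trans one_pos hq
  set gh : ℤ → ℝ := fun v => g (A+B-1-v) with hgh
  have h1 : ∑ t ∈ Finset.Icc A B, Mm A B g t ^ q = ∑ u ∈ Finset.Icc A B, Mp B gh u ^ q := by
    apply Finset.sum_nbij' (i := fun t => A+B-t) (j := fun u => A+B-u)
    · intro t ht; simp only [Finset.mem_Icc] at ht ⊢; omega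
    · intro u hu; simp only [Finset.mem_Icc] at hu ⊢; omega
    · intro t _; omega
    · intro u _; omega
    · intro t _; rfl
  have h2 := maximal_ineq A B gh (fun u => hg _) q hq
  have h3 : ∑ u ∈ Finset.Icc A B, gh u ^ q = ∑ w ∈ Finset.Icc (A-1) (B-1), g w ^ q := by
    apply Finset.sum_nbij' (i := fun u => A+B-1-u) (j := fun w => A+B-1-w)
    · intro u hu; simp only [Finset.mem_Icc] at hu ⊢; omega
    · intro w hw; simp only [Finset.mem_Icc] at hw ⊢; omega
    · intro u _; omega
    · intro w _; omega
    · intro u _; rfl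
  have h4 : ∑ w ∈ Finset.Icc (A-1) (B-1), g w ^ q ≤ ∑ w ∈ Finset.Icc A B, g w ^ q := by
    have hins : Finset.Icc (A-1) (B-1) = insert (A-1) (Finset.Icc A (B-1)) := by
      apply Finset.ext; intro x
      simp only [Finset.mem_insert, Finset.mem_Icc]
      omega
    rw [hins, Finset.sum_insert (by simp only [Finset.mem_Icc]; omega)]
    rw [hgA, Real.zero_rpow hq0.ne', zero_add]
    apply Finset.sum_le_sum_of_subset_of_nonneg (Finset.Icc_subset_Icc_right (by omega))
    intro w _ _
    exact Real.rpow_nonneg (hg w) _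
  rw [h1]
  calc ∑ u ∈ Finset.Icc A B, Mp B gh u ^ q ≤ (q/(q-1))^q * ∑ u ∈ Finset.Icc A B, gh u ^ q := h2
    _ = (q/(q-1))^q * ∑ w ∈ Finset.Icc (A-1) (B-1), g w ^ q := by rw [h3]
    _ ≤ (q/(q-1))^q * ∑ w ∈ Finset.Icc A B, g w ^ q := by
        apply mul_le_mul_of_nonneg_left h4
        have hq1 : (0:ℝ) < q - 1 := by linarith
        exact Real.rpow_nonneg (le_of_lt (div_pos hq0 hq1)) _


lemma add_rpow_le_two_rpow {x y p : ℝ} (hx : 0 ≤ x) (hy : 0 ≤ y) (hp : 1 ≤ p) :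
    (x + y) ^ p ≤ 2 ^ (p-1) * (x ^ p + y ^ p) := by
  have h := NNReal.rpow_add_le_mul_rpow_add_rpow ⟨x,hx⟩ ⟨y,hy⟩ hp
  have h2 := NNReal.coe_le_coe.2 h
  push_cast at h2
  exact h2


lemma rpow_split {x α : ℝ} (hx : 0 ≤ x) (hα : 1 < α) : x ^ α = x * x ^ (α - 1) := by
  have hα0 : (0:ℝ) < α := lt_trans one_pos hα
  rcases eq_or_lt_of_le hx with h0 | hx0
  · rw [← h0, Real.zero_rpow hα0.ne', Real.zero_rpow (show α - 1 ≠ 0 by intro h; linarith [sub_eq_zero.mp h]), mul_zero]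
  · nth_rewrite 2 [← Real.rpow_one x]
    rw [← Real.rpow_add hx0]
    congr 1
    ring

end AuxAVR

theorem stmt1 {ι : Type*} [Fintype ι] (α : ℝ) (hα : 1 < α)
    (job : ι → Job) (hv : ∀ i, (job i).Valid)
    (st : ι → ℤ) (hst : Feasible job st) :
    ∑' t : ℤ, avg job t ^ α ≤ ((2 * α) ^ α / 2) * cost α job st := by
  classical
  have hα0 : (0:ℝ) < α := lt_trans one_pos hα
  have hα1 : (0:ℝ) < α - 1 := by linarith
  rcases isEmpty_or_nonempty ι with hempty | hne
  · have h1 : ∑' t : ℤ, avg job t ^ α = 0 := by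
      have hz : ∀ t : ℤ, avg job t ^ α = 0 := by
        intro t
        rw [avg, Finset.univ_eq_empty, Finset.sum_empty, Real.zero_rpow hα0.ne']
      simp only [hz, tsum_zero]
    have h2 : cost α job st = 0 := by
      rw [cost]
      have hz : ∀ t : ℤ, load job st t ^ α = 0 := by
        intro t
        rw [load, Finset.univ_eq_empty, Finset.sum_empty, Real.zero_rpow hα0.ne']
      simp only [hz, tsum_zero]
    rw [h1, h2, mul_zero]
  · haveI := hne
    obtain ⟨i0⟩ := hne
    have hw : ∀ i, 1 ≤ (job i).w := fun i => (hv i).1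
    have hh : ∀ i, 0 < (job i).h := fun i => (hv i).2.1
    have hrd : ∀ i, (job i).r + (job i).w ≤ (job i).d := fun i => (hv i).2.2
    have hs1 : ∀ i, (job i).r ≤ st i := fun i => (hst i).1
    have hs2 : ∀ i, st i + (job i).w ≤ (job i).d := fun i => (hst i).2
    set A : ℤ := Finset.univ.inf' Finset.univ_nonempty (fun i => (job i).r) with hAdef
    set Dd : ℤ := Finset.univ.sup' Finset.univ_nonempty (fun i => (job i).d) with hDdef
    set B : ℤ := Dd - 1 with hBdef
    have hrA : ∀ i, A ≤ (job i).r := fun i => Finset.inf'_le (fun j => (job j).r) (Finset.mem_univ i)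
    have hdD : ∀ i, (job i).d ≤ Dd := fun i => Finset.le_sup' (fun j => (job j).d) (Finset.mem_univ i)
    have hAB : A ≤ B := by
      have h1 := hrA i0; have h2 := hdD i0; have h3 := hw i0; have h4 := hrd i0; omega
    set W : Finset ℤ := Finset.Icc A B with hWdef
    have hDpos : ∀ i, (0:ℝ) < ((job i).d : ℝ) - ((job i).r : ℝ) := by
      intro i
      have h1 : (job i).r < (job i).d := by have := hw i; have := hrd i; omega
      have h2 : ((job i).r : ℝ) < ((job i).d : ℝ) := Int.cast_lt.mpr h1
      linarith
    set L : ℤ → ℝ := fun t => ∑ i, ∑ s ∈ Finset.Ico (st i) (st i + (job i).w),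
      (if s ≤ t ∧ t < (job i).d then (job i).h / (((job i).d : ℝ) - ((job i).r : ℝ)) else 0)
      with hLdef
    set R : ℤ → ℝ := fun t => ∑ i, ∑ s ∈ Finset.Ico (st i) (st i + (job i).w),
      (if (job i).r ≤ t ∧ t < s then (job i).h / (((job i).d : ℝ) - ((job i).r : ℝ)) else 0)
      with hRdef
    have hLnn : ∀ t, 0 ≤ L t := by
      intro t
      apply Finset.sum_nonneg; intro i _
      apply Finset.sum_nonneg; intro s _
      split_ifs with h
      · exact div_nonneg (hh i).le (hDpos i).le
      · exact le_refl 0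
    have hRnn : ∀ t, 0 ≤ R t := by
      intro t
      apply Finset.sum_nonneg; intro i _
      apply Finset.sum_nonneg; intro s _
      split_ifs with h
      · exact div_nonneg (hh i).le (hDpos i).le
      · exact le_refl 0
    -- avg decomposition
    have havgLR : ∀ t, avg job t = L t + R t := by
      intro t
      rw [avg]
      simp only [hLdef, hRdef]
      rw [← Finset.sum_add_distrib]
      apply Finset.sum_congr rfl
      intro i _
      by_cases hc : (job i).r ≤ t ∧ t < (job i).d
      · rw [if_pos hc, ← Finset.sum_add_distrib]
        have hterm : ∀ s ∈ Finset.Ico (st i) (st i + (job i).w),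
            ((if s ≤ t ∧ t < (job i).d then (job i).h / (((job i).d : ℝ) - ((job i).r : ℝ)) else 0)
              + (if (job i).r ≤ t ∧ t < s then (job i).h / (((job i).d : ℝ) - ((job i).r : ℝ)) else 0))
            = (job i).h / (((job i).d : ℝ) - ((job i).r : ℝ)) := by
          intro s hs
          rw [Finset.mem_Ico] at hs
          rcases le_or_gt s t with h1 | h1
          · rw [if_pos ⟨h1, hc.2⟩, if_neg (by omega), add_zero]
          · rw [if_neg (by omega), if_pos ⟨hc.1, h1⟩, zero_add]
        rw [Finset.sum_congr rfl hterm, Finset.sum_const, Int.card_Ico, nsmul_eq_mul]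
        have hwcast : (((st i + (job i).w - st i).toNat : ℕ) : ℝ) = ((job i).w : ℝ) := by
          have h1 : ((st i + (job i).w - st i).toNat : ℤ) = (job i).w := by
            rw [Int.toNat_of_nonneg (by have := hw i; omega)]; ring
          exact_mod_cast congrArg (Int.cast : ℤ → ℝ) h1
        rw [hwcast, den]
        exact mul_div_assoc _ _ _
      · rw [if_neg hc]
        symm
        have z1 : (∑ s ∈ Finset.Ico (st i) (st i + (job i).w),
            if s ≤ t ∧ t < (job i).d then (job i).h / (((job i).d : ℝ) - ((job i).r : ℝ)) else 0) = 0 := by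
          apply Finset.sum_eq_zero
          intro s hs
          rw [Finset.mem_Ico] at hs
          have h1 := hs1 i; have h2 := hs2 i
          split_ifs with h
          · exfalso; omega
          · rfl
        have z2 : (∑ s ∈ Finset.Ico (st i) (st i + (job i).w),
            if (job i).r ≤ t ∧ t < s then (job i).h / (((job i).d : ℝ) - ((job i).r : ℝ)) else 0) = 0 := by
          apply Finset.sum_eq_zero
          intro s hs
          rw [Finset.mem_Ico] at hs
          have h1 := hs1 i; have h2 := hs2 i
          split_ifs with h
          · exfalso; omega
          · rfl
        rw [z1, z2, add_zero]
    -- supports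
    have havg0 : ∀ t ∉ W, avg job t ^ α = 0 := by
      intro t ht
      rw [hWdef, Finset.mem_Icc] at ht
      have hz : avg job t = 0 := by
        rw [avg]
        apply Finset.sum_eq_zero
        intro i _
        have h1 := hrA i; have h2 := hdD i
        split_ifs with h
        · exfalso; omega
        · rfl
      rw [hz, Real.zero_rpow hα0.ne']
    have hload0 : ∀ t ∉ W, load job st t ^ α = 0 := by
      intro t ht
      rw [hWdef, Finset.mem_Icc] at ht
      have hz : load job st t = 0 := by
        rw [load]
        apply Finset.sum_eq_zero
        intro i _
        have h1 := hrA i; have h2 := hdD i; have h3 := hs1 i; have h4 := hs2 i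
        split_ifs with h
        · exfalso; omega
        · rfl
      rw [hz, Real.zero_rpow hα0.ne']
    have hts1 : ∑' t : ℤ, avg job t ^ α = ∑ t ∈ W, avg job t ^ α := tsum_eq_sum havg0
    have hts2 : cost α job st = ∑ t ∈ W, load job st t ^ α := by
      rw [cost]; exact tsum_eq_sum hload0
    -- exponents
    set gL : ℤ → ℝ := fun t => L t ^ (α - 1) with hgLdef
    set gR : ℤ → ℝ := fun t => R t ^ (α - 1) with hgRdef
    set q : ℝ := α / (α - 1) with hqdef
    have hq : 1 < q := (one_lt_div hα1).mpr (by linarith)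
    have hq0 : (0:ℝ) < q := lt_trans one_pos hq
    have hq1 : q - 1 = 1 / (α - 1) := by
      rw [hqdef]; field_simp; ring
    have hqc : q / (q - 1) = α := by
      rw [hq1, hqdef]; field_simp
    have hexpq : (α - 1) * q = α := by rw [hqdef]; field_simp
    have h1q : 1 / q = 1 - 1 / α := by rw [hqdef]; field_simp
    have hgLnn : ∀ u, 0 ≤ gL u := fun u => Real.rpow_nonneg (hLnn u) _
    have hgRnn : ∀ u, 0 ≤ gR u := fun u => Real.rpow_nonneg (hRnn u) _
    have hgLq : ∀ t, gL t ^ q = L t ^ α := by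
      intro t
      simp only [hgLdef]
      rw [← Real.rpow_mul (hLnn t), hexpq]
    have hgRq : ∀ t, gR t ^ q = R t ^ α := by
      intro t
      simp only [hgRdef]
      rw [← Real.rpow_mul (hRnn t), hexpq]
    have hRA : R (A-1) = 0 := by
      simp only [hRdef]
      apply Finset.sum_eq_zero; intro i _
      apply Finset.sum_eq_zero; intro s hs
      have h1 := hrA i
      split_ifs with h
      · exfalso; omega
      · rfl
    have hgRA : gR (A-1) = 0 := by
      simp only [hgRdef]; rw [hRA, Real.zero_rpow hα1.ne']
    set H : ℤ → ℝ := fun s => max (Mp B gL s) (Mm A B gR s) with hHdef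
    have hHnn : ∀ s, 0 ≤ H s :=
      fun s => le_trans (Mp_nonneg B gL hgLnn s) (le_max_left _ _)
    -- expansion for L
    have hexpL : ∑ t ∈ W, L t * gL t
        = ∑ i, ∑ s ∈ Finset.Ico (st i) (st i + (job i).w),
            ((job i).h / (((job i).d:ℝ) - ((job i).r:ℝ))) * ∑ t ∈ Finset.Ico s ((job i).d), gL t := by
      calc ∑ t ∈ W, L t * gL t
          = ∑ t ∈ W, ∑ i, ∑ s ∈ Finset.Ico (st i) (st i + (job i).w),
              (if s ≤ t ∧ t < (job i).d
                then ((job i).h / (((job i).d:ℝ) - ((job i).r:ℝ))) * gL t else 0) := by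
            apply Finset.sum_congr rfl; intro t _
            simp only [hLdef]
            rw [Finset.sum_mul]
            apply Finset.sum_congr rfl; intro i _
            rw [Finset.sum_mul]
            apply Finset.sum_congr rfl; intro s _
            rw [ite_mul, zero_mul]
        _ = ∑ i, ∑ t ∈ W, ∑ s ∈ Finset.Ico (st i) (st i + (job i).w),
              (if s ≤ t ∧ t < (job i).d
                then ((job i).h / (((job i).d:ℝ) - ((job i).r:ℝ))) * gL t else 0) :=
            Finset.sum_comm
        _ = ∑ i, ∑ s ∈ Finset.Ico (st i) (st i + (job i).w), ∑ t ∈ W,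
              (if s ≤ t ∧ t < (job i).d
                then ((job i).h / (((job i).d:ℝ) - ((job i).r:ℝ))) * gL t else 0) := by
            apply Finset.sum_congr rfl; intro i _
            exact Finset.sum_comm
        _ = ∑ i, ∑ s ∈ Finset.Ico (st i) (st i + (job i).w),
            ((job i).h / (((job i).d:ℝ) - ((job i).r:ℝ))) * ∑ t ∈ Finset.Ico s ((job i).d), gL t := by
            apply Finset.sum_congr rfl; intro i _
            apply Finset.sum_congr rfl; intro s hs
            rw [Finset.mem_Ico] at hs
            have hIeq : W.filter (fun t => s ≤ t ∧ t < (job i).d) = Finset.Ico s ((job i).d) := by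
              apply Finset.ext; intro t
              simp only [Finset.mem_filter, Finset.mem_Ico, hWdef, Finset.mem_Icc]
              have h1 := hs1 i; have h2 := hs2 i; have h3 := hrA i; have h4 := hdD i
              constructor
              · intro hx; exact ⟨hx.2.1, hx.2.2⟩
              · intro hx; refine ⟨⟨?_, ?_⟩, hx.1, hx.2⟩ <;> omega
            rw [← Finset.sum_filter, hIeq, ← Finset.mul_sum]
    -- expansion for R
    have hexpR : ∑ t ∈ W, R t * gR t
        = ∑ i, ∑ s ∈ Finset.Ico (st i) (st i + (job i).w),
            ((job i).h / (((job i).d:ℝ) - ((job i).r:ℝ))) * ∑ t ∈ Finset.Ico ((job i).r) s, gR t := by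
      calc ∑ t ∈ W, R t * gR t
          = ∑ t ∈ W, ∑ i, ∑ s ∈ Finset.Ico (st i) (st i + (job i).w),
              (if (job i).r ≤ t ∧ t < s
                then ((job i).h / (((job i).d:ℝ) - ((job i).r:ℝ))) * gR t else 0) := by
            apply Finset.sum_congr rfl; intro t _
            simp only [hRdef]
            rw [Finset.sum_mul]
            apply Finset.sum_congr rfl; intro i _
            rw [Finset.sum_mul]
            apply Finset.sum_congr rfl; intro s _
            rw [ite_mul, zero_mul]
        _ = ∑ i, ∑ t ∈ W, ∑ s ∈ Finset.Ico (st i) (st i + (job i).w),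
              (if (job i).r ≤ t ∧ t < s
                then ((job i).h / (((job i).d:ℝ) - ((job i).r:ℝ))) * gR t else 0) :=
            Finset.sum_comm
        _ = ∑ i, ∑ s ∈ Finset.Ico (st i) (st i + (job i).w), ∑ t ∈ W,
              (if (job i).r ≤ t ∧ t < s
                then ((job i).h / (((job i).d:ℝ) - ((job i).r:ℝ))) * gR t else 0) := by
            apply Finset.sum_congr rfl; intro i _
            exact Finset.sum_comm
        _ = ∑ i, ∑ s ∈ Finset.Ico (st i) (st i + (job i).w),
            ((job i).h / (((job i).d:ℝ) - ((job i).r:ℝ))) * ∑ t ∈ Finset.Ico ((job i).r) s, gR t := by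
            apply Finset.sum_congr rfl; intro i _
            apply Finset.sum_congr rfl; intro s hs
            rw [Finset.mem_Ico] at hs
            have hIeq : W.filter (fun t => (job i).r ≤ t ∧ t < s) = Finset.Ico ((job i).r) s := by
              apply Finset.ext; intro t
              simp only [Finset.mem_filter, Finset.mem_Ico, hWdef, Finset.mem_Icc]
              have h1 := hs1 i; have h2 := hs2 i; have h3 := hrA i; have h4 := hdD i
              constructor
              · intro hx; exact ⟨hx.2.1, hx.2.2⟩
              · intro hx; refine ⟨⟨?_, ?_⟩, hx.1, hx.2⟩ <;> omega
            rw [← Finset.sum_filter, hIeq, ← Finset.mul_sum]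
    -- per-term bounds
    have hbL : ∀ i, ∀ s ∈ Finset.Ico (st i) (st i + (job i).w),
        ((job i).h / (((job i).d:ℝ) - ((job i).r:ℝ))) * ∑ t ∈ Finset.Ico s ((job i).d), gL t
          ≤ (job i).h * (((((job i).d:ℝ) - (s:ℝ)) / (((job i).d:ℝ) - ((job i).r:ℝ))) * Mp B gL s) := by
      intro i s hs
      rw [Finset.mem_Ico] at hs
      have h2 := hs2 i; have h4 := hdD i
      have hn1 : (1:ℤ) ≤ (job i).d - s := by omega
      have hmp := Mp_ge B gL s ((job i).d - s) hn1 (by omega)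
      rw [show s + ((job i).d - s) = (job i).d from by ring] at hmp
      have hnpos : (0:ℝ) < (((job i).d - s : ℤ):ℝ) := by exact_mod_cast (by omega : (0:ℤ) < (job i).d - s)
      rw [div_le_iff₀ hnpos] at hmp
      have hcast : (((job i).d - s : ℤ):ℝ) = ((job i).d:ℝ) - (s:ℝ) := by push_cast; ring
      calc ((job i).h / (((job i).d:ℝ) - ((job i).r:ℝ))) * ∑ t ∈ Finset.Ico s ((job i).d), gL t
          ≤ ((job i).h / (((job i).d:ℝ) - ((job i).r:ℝ))) * (Mp B gL s * (((job i).d - s : ℤ):ℝ)) :=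
            mul_le_mul_of_nonneg_left hmp (div_nonneg (hh i).le (hDpos i).le)
        _ = (job i).h * (((((job i).d:ℝ) - (s:ℝ)) / (((job i).d:ℝ) - ((job i).r:ℝ))) * Mp B gL s) := by
            rw [hcast]; ring
    have hbR : ∀ i, ∀ s ∈ Finset.Ico (st i) (st i + (job i).w),
        ((job i).h / (((job i).d:ℝ) - ((job i).r:ℝ))) * ∑ t ∈ Finset.Ico ((job i).r) s, gR t
          ≤ (job i).h * ((((s:ℝ) - ((job i).r:ℝ)) / (((job i).d:ℝ) - ((job i).r:ℝ))) * Mm A B gR s) := by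
      intro i s hs
      rw [Finset.mem_Ico] at hs
      have h1 := hs1 i; have h3 := hrA i
      rcases eq_or_lt_of_le (show (job i).r ≤ s by omega) with hrs | hrs
      · rw [← hrs, Finset.Ico_self, Finset.sum_empty, mul_zero, sub_self, zero_div, zero_mul, mul_zero]
      · have hn1 : (1:ℤ) ≤ s - (job i).r := by omega
        have hmm := Mm_ge A B gR s (s - (job i).r) hn1 (by omega)
        rw [show s - (s - (job i).r) = (job i).r from by ring] at hmm
        have hnpos : (0:ℝ) < ((s - (job i).r : ℤ):ℝ) := by exact_mod_cast (by omega : (0:ℤ) < s - (job i).r)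
        rw [div_le_iff₀ hnpos] at hmm
        have hcast : ((s - (job i).r : ℤ):ℝ) = (s:ℝ) - ((job i).r:ℝ) := by push_cast; ring
        calc ((job i).h / (((job i).d:ℝ) - ((job i).r:ℝ))) * ∑ t ∈ Finset.Ico ((job i).r) s, gR t
            ≤ ((job i).h / (((job i).d:ℝ) - ((job i).r:ℝ))) * (Mm A B gR s * ((s - (job i).r : ℤ):ℝ)) :=
              mul_le_mul_of_nonneg_left hmm (div_nonneg (hh i).le (hDpos i).le)
          _ = (job i).h * ((((s:ℝ) - ((job i).r:ℝ)) / (((job i).d:ℝ) - ((job i).r:ℝ))) * Mm A B gR s) := by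
              rw [hcast]; ring
    -- combine into load * H
    have hcomb : ∑ t ∈ W, L t ^ α + ∑ t ∈ W, R t ^ α ≤ ∑ t ∈ W, load job st t * H t := by
      have e1 : ∑ t ∈ W, L t ^ α = ∑ t ∈ W, L t * gL t :=
        Finset.sum_congr rfl (fun t _ => by simp only [hgLdef]; exact rpow_split (hLnn t) hα)
      have e2 : ∑ t ∈ W, R t ^ α = ∑ t ∈ W, R t * gR t :=
        Finset.sum_congr rfl (fun t _ => by simp only [hgRdef]; exact rpow_split (hRnn t) hα)
      rw [e1, e2, hexpL, hexpR, ← Finset.sum_add_distrib]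
      have step : ∀ i ∈ (Finset.univ : Finset ι),
          (∑ s ∈ Finset.Ico (st i) (st i + (job i).w),
            ((job i).h / (((job i).d:ℝ) - ((job i).r:ℝ))) * ∑ t ∈ Finset.Ico s ((job i).d), gL t)
          + (∑ s ∈ Finset.Ico (st i) (st i + (job i).w),
            ((job i).h / (((job i).d:ℝ) - ((job i).r:ℝ))) * ∑ t ∈ Finset.Ico ((job i).r) s, gR t)
          ≤ ∑ s ∈ Finset.Ico (st i) (st i + (job i).w), (job i).h * H s := by
        intro i _
        rw [← Finset.sum_add_distrib]
        apply Finset.sum_le_sum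
        intro s hs
        have hstep := add_le_add (hbL i s hs) (hbR i s hs)
        refine le_trans hstep ?_
        rw [Finset.mem_Ico] at hs
        have h1 := hs1 i; have h2 := hs2 i
        have hanum : (0:ℝ) ≤ ((job i).d:ℝ) - (s:ℝ) := by
          have : (s:ℝ) ≤ ((job i).d:ℝ) := Int.cast_le.mpr (by omega)
          linarith
        have hbnum : (0:ℝ) ≤ (s:ℝ) - ((job i).r:ℝ) := by
          have : ((job i).r:ℝ) ≤ (s:ℝ) := Int.cast_le.mpr (by omega)
          linarith
        have ha : (0:ℝ) ≤ (((job i).d:ℝ) - (s:ℝ)) / (((job i).d:ℝ) - ((job i).r:ℝ)) :=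
          div_nonneg hanum (hDpos i).le
        have hb : (0:ℝ) ≤ ((s:ℝ) - ((job i).r:ℝ)) / (((job i).d:ℝ) - ((job i).r:ℝ)) :=
          div_nonneg hbnum (hDpos i).le
        have hab : (((job i).d:ℝ) - (s:ℝ)) / (((job i).d:ℝ) - ((job i).r:ℝ))
            + ((s:ℝ) - ((job i).r:ℝ)) / (((job i).d:ℝ) - ((job i).r:ℝ)) = 1 := by
          rw [← add_div, div_eq_one_iff_eq (hDpos i).ne']
          ring
        have hmaxb : (((job i).d:ℝ) - (s:ℝ)) / (((job i).d:ℝ) - ((job i).r:ℝ)) * Mp B gL s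
            + ((s:ℝ) - ((job i).r:ℝ)) / (((job i).d:ℝ) - ((job i).r:ℝ)) * Mm A B gR s ≤ H s := by
          calc _ ≤ (((job i).d:ℝ) - (s:ℝ)) / (((job i).d:ℝ) - ((job i).r:ℝ)) * H s
              + ((s:ℝ) - ((job i).r:ℝ)) / (((job i).d:ℝ) - ((job i).r:ℝ)) * H s :=
                add_le_add (mul_le_mul_of_nonneg_left (le_max_left _ _) ha)
                  (mul_le_mul_of_nonneg_left (le_max_right _ _) hb)
            _ = H s := by rw [← add_mul, hab, one_mul]
        calc (job i).h * (((((job i).d:ℝ) - (s:ℝ)) / (((job i).d:ℝ) - ((job i).r:ℝ))) * Mp B gL s)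
            + (job i).h * ((((s:ℝ) - ((job i).r:ℝ)) / (((job i).d:ℝ) - ((job i).r:ℝ))) * Mm A B gR s)
            = (job i).h * ((((job i).d:ℝ) - (s:ℝ)) / (((job i).d:ℝ) - ((job i).r:ℝ)) * Mp B gL s
                + ((s:ℝ) - ((job i).r:ℝ)) / (((job i).d:ℝ) - ((job i).r:ℝ)) * Mm A B gR s) := by ring
          _ ≤ (job i).h * H s := mul_le_mul_of_nonneg_left hmaxb (hh i).le
      refine le_trans (Finset.sum_le_sum step) (le_of_eq ?_)
      -- regroup: ∑ i ∑ s h * H s = ∑ t load * H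
      have regroup : ∀ i, ∑ s ∈ Finset.Ico (st i) (st i + (job i).w), (job i).h * H s
          = ∑ t ∈ W, (if st i ≤ t ∧ t < st i + (job i).w then (job i).h * H t else 0) := by
        intro i
        rw [← Finset.sum_filter]
        have hIeq : W.filter (fun t => st i ≤ t ∧ t < st i + (job i).w)
            = Finset.Ico (st i) (st i + (job i).w) := by
          apply Finset.ext; intro t
          simp only [Finset.mem_filter, Finset.mem_Ico, hWdef, Finset.mem_Icc]
          have h1 := hs1 i; have h2 := hs2 i; have h3 := hrA i; have h4 := hdD i
          constructor
          · intro hx; exact ⟨hx.2.1, hx.2.2⟩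
          · intro hx; refine ⟨⟨?_, ?_⟩, hx.1, hx.2⟩ <;> omega
        rw [hIeq]
      rw [Finset.sum_congr rfl (fun i _ => regroup i), Finset.sum_comm]
      apply Finset.sum_congr rfl
      intro t _
      rw [load, Finset.sum_mul]
      exact Finset.sum_congr rfl (fun i _ => by rw [ite_mul, zero_mul])
    -- Hölder
    have hloadnn : ∀ t, 0 ≤ load job st t := by
      intro t
      rw [load]
      apply Finset.sum_nonneg; intro i _
      split_ifs with h
      · exact (hh i).le
      · exact le_refl 0
    have hpq : α.HolderConjugate q := (Real.holderConjugate_iff_eq_conjExponent hα).mpr hqdef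
    have hholder := Real.inner_le_Lp_mul_Lq W (fun t => load job st t) H hpq
    have habs1 : ∑ t ∈ W, |load job st t| ^ α = ∑ t ∈ W, load job st t ^ α :=
      Finset.sum_congr rfl (fun t _ => by rw [abs_of_nonneg (hloadnn t)])
    have habs2 : ∑ t ∈ W, |H t| ^ q = ∑ t ∈ W, H t ^ q :=
      Finset.sum_congr rfl (fun t _ => by rw [abs_of_nonneg (hHnn t)])
    rw [habs1, habs2] at hholder
    -- maximal bounds
    have hmaxL := maximal_ineq A B gL hgLnn q hq
    have hmaxR := Mm_maximal A B hAB gR hgRnn hgRA q hq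
    rw [hqc] at hmaxL hmaxR
    have hgLsum : ∑ t ∈ Finset.Icc A B, gL t ^ q = ∑ t ∈ W, L t ^ α := by
      rw [← hWdef]
      exact Finset.sum_congr rfl (fun t _ => hgLq t)
    have hgRsum : ∑ t ∈ Finset.Icc A B, gR t ^ q = ∑ t ∈ W, R t ^ α := by
      rw [← hWdef]
      exact Finset.sum_congr rfl (fun t _ => hgRq t)
    rw [hgLsum] at hmaxL
    rw [hgRsum] at hmaxR
    have hHq : ∑ t ∈ W, H t ^ q ≤ α ^ q * (∑ t ∈ W, L t ^ α + ∑ t ∈ W, R t ^ α) := by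
      have hmax : ∀ t, H t ^ q ≤ Mp B gL t ^ q + Mm A B gR t ^ q := by
        intro t
        rcases max_cases (Mp B gL t) (Mm A B gR t) with ⟨heq, _⟩ | ⟨heq, _⟩
        · rw [hHdef]; dsimp only; rw [heq]
          exact le_add_of_nonneg_right (Real.rpow_nonneg (Mm_nonneg A B gR hgRnn t) _)
        · rw [hHdef]; dsimp only; rw [heq]
          exact le_add_of_nonneg_left (Real.rpow_nonneg (Mp_nonneg B gL hgLnn t) _)
      calc ∑ t ∈ W, H t ^ q ≤ ∑ t ∈ W, (Mp B gL t ^ q + Mm A B gR t ^ q) :=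
            Finset.sum_le_sum (fun t _ => hmax t)
        _ = ∑ t ∈ W, Mp B gL t ^ q + ∑ t ∈ W, Mm A B gR t ^ q := Finset.sum_add_distrib
        _ ≤ α ^ q * ∑ t ∈ W, L t ^ α + α ^ q * ∑ t ∈ W, R t ^ α := by
            rw [hWdef]; exact add_le_add hmaxL hmaxR
        _ = α ^ q * (∑ t ∈ W, L t ^ α + ∑ t ∈ W, R t ^ α) := by ring
    -- kickback
    set Y : ℝ := ∑ t ∈ W, L t ^ α + ∑ t ∈ W, R t ^ α with hYdef
    set C : ℝ := ∑ t ∈ W, load job st t ^ α with hCdef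
    have hYnn : 0 ≤ Y := by
      rw [hYdef]
      apply add_nonneg <;>
        exact Finset.sum_nonneg (fun t _ => Real.rpow_nonneg (by first | exact hLnn t | exact hRnn t) _)
    have hCnn : 0 ≤ C := by
      rw [hCdef]
      exact Finset.sum_nonneg (fun t _ => Real.rpow_nonneg (hloadnn t) _)
    have hHqnn : 0 ≤ ∑ t ∈ W, H t ^ q :=
      Finset.sum_nonneg (fun t _ => Real.rpow_nonneg (hHnn t) _)
    have hchain : Y ≤ (α * C ^ (1/α)) * Y ^ (1 - 1/α) := by
      calc Y ≤ ∑ t ∈ W, load job st t * H t := hcomb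
        _ ≤ (∑ t ∈ W, load job st t ^ α) ^ (1/α) * (∑ t ∈ W, H t ^ q) ^ (1/q) := hholder
        _ ≤ C ^ (1/α) * (α ^ q * Y) ^ (1/q) := by
            apply mul_le_mul_of_nonneg_left _ (Real.rpow_nonneg hCnn _)
            exact Real.rpow_le_rpow hHqnn hHq (by positivity)
        _ = (α * C ^ (1/α)) * Y ^ (1 - 1/α) := by
            rw [Real.mul_rpow (by positivity) hYnn, ← Real.rpow_mul hα0.le,
              mul_one_div_cancel hq0.ne', Real.rpow_one, h1q]
            ring
    have hfin := kickback hα hYnn (by positivity) hchain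
    have hfin2 : Y ≤ α ^ α * C := by
      calc Y ≤ (α * C ^ (1/α)) ^ α := hfin
        _ = α ^ α * C := by
            rw [Real.mul_rpow hα0.le (Real.rpow_nonneg hCnn _), ← Real.rpow_mul hCnn,
              one_div_mul_cancel hα0.ne', Real.rpow_one]
    -- final
    rw [hts1, hts2]
    have hstep1 : ∑ t ∈ W, avg job t ^ α ≤ 2 ^ (α-1) * Y := by
      calc ∑ t ∈ W, avg job t ^ α ≤ ∑ t ∈ W, (2 ^ (α-1) * (L t ^ α + R t ^ α)) := by
            apply Finset.sum_le_sum; intro t _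
            rw [havgLR t]
            exact add_rpow_le_two_rpow (hLnn t) (hRnn t) hα.le
        _ = 2 ^ (α-1) * Y := by
            rw [← Finset.mul_sum, hYdef, Finset.sum_add_distrib]
    calc ∑ t ∈ W, avg job t ^ α ≤ 2 ^ (α-1) * Y := hstep1
      _ ≤ 2 ^ (α-1) * (α ^ α * C) := by
          apply mul_le_mul_of_nonneg_left hfin2
          positivity
      _ = ((2 * α) ^ α / 2) * C := by
          rw [Real.mul_rpow (by norm_num : (0:ℝ) ≤ 2) hα0.le,
            Real.rpow_sub (by norm_num : (0:ℝ) < 2), Real.rpow_one]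
          ring
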